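/- Let R be a ring with identity and P a two-sided ideal of R. Then P is an almost prime right ideal (i.e., the almost prime condition holds for all right ideals A, B) if and only if P is an almost prime ideal (i.e., the condition holds for all two-sided ideals A, B). -/

import Mathlib

variable {R : Type*}

/-- `P` is a right ideal of the (possibly nonunital, noncommutative) ring `R`. -/
def IsRightIdeal [NonUnitalRing R] (P : AddSubgroup R) : Prop :=
  ∀ a ∈ P, ∀ r : R, a * r ∈ P

/-- The product `AB` of two right ideals: the additive subgroup generated by products. -/
def idealMul [NonUnitalRing R] (A B : AddSubgroup R) : AddSubgroup R :=
  AddSubgroup.closure {x : R | ∃ a ∈ A, ∃ b ∈ B, x = a * b}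

/-- `P` is an almost prime right ideal. -/
def IsAlmostPrimeRight [NonUnitalRing R] (P : AddSubgroup R) : Prop :=
  IsRightIdeal P ∧ P ≠ ⊤ ∧
    ∀ A B : AddSubgroup R, IsRightIdeal A → IsRightIdeal B →
      idealMul A B ≤ P → ¬ idealMul A B ≤ idealMul P P → A ≤ P ∨ B ≤ P

/-- `P` is a two-sided ideal of `R`. -/
def IsTwoSidedIdealSub [NonUnitalRing R] (P : AddSubgroup R) : Prop :=
  ∀ a ∈ P, ∀ r : R, a * r ∈ P ∧ r * a ∈ P

/-- `P` is an almost prime (two-sided) ideal. -/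
def IsAlmostPrimeTwoSided [NonUnitalRing R] (P : AddSubgroup R) : Prop :=
  IsTwoSidedIdealSub P ∧ P ≠ ⊤ ∧
    ∀ A B : AddSubgroup R, IsTwoSidedIdealSub A → IsTwoSidedIdealSub B →
      idealMul A B ≤ P → ¬ idealMul A B ≤ idealMul P P → A ≤ P ∨ B ≤ P

section Proof

lemma idealMul_le_of [NonUnitalRing R] {A B P : AddSubgroup R}
    (h : ∀ a ∈ A, ∀ b ∈ B, a * b ∈ P) : idealMul A B ≤ P := by
  apply (AddSubgroup.closure_le P).2
  rintro x ⟨a, ha, b, hb, rfl⟩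
  exact h a ha b hb

lemma idealMul_mono [NonUnitalRing R] {A A' B B' : AddSubgroup R}
    (hA : A ≤ A') (hB : B ≤ B') : idealMul A B ≤ idealMul A' B' := by
  apply AddSubgroup.closure_mono
  rintro x ⟨a, ha, b, hb, rfl⟩
  exact ⟨a, hA ha, b, hB hb, rfl⟩

/-- The two-sided ideal generated by a right ideal. -/
def leftHat [Ring R] (A : AddSubgroup R) : AddSubgroup R :=
  AddSubgroup.closure {x : R | ∃ r : R, ∃ a ∈ A, x = r * a}

lemma le_leftHat [Ring R] (A : AddSubgroup R) : A ≤ leftHat A := fun a ha =>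
  AddSubgroup.subset_closure ⟨1, a, ha, (one_mul a).symm⟩

lemma leftHat_twoSided [Ring R] {A : AddSubgroup R} (hA : IsRightIdeal A) :
    IsTwoSidedIdealSub (leftHat A) := by
  intro x hx r
  induction hx using AddSubgroup.closure_induction with
  | mem y hy =>
    obtain ⟨s, a, ha, rfl⟩ := hy
    constructor
    · exact AddSubgroup.subset_closure ⟨s, a * r, hA a ha r, (mul_assoc s a r)⟩
    · exact AddSubgroup.subset_closure ⟨r * s, a, ha, (mul_assoc r s a).symm⟩
  | zero => exact ⟨by simpa using (leftHat A).zero_mem, by simpa using (leftHat A).zero_mem⟩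
  | add y z _ _ hy hz =>
    constructor
    · simpa [add_mul] using (leftHat A).add_mem hy.1 hz.1
    · simpa [mul_add] using (leftHat A).add_mem hy.2 hz.2
  | neg y _ hy =>
    constructor
    · simpa [neg_mul] using (leftHat A).neg_mem hy.1
    · simpa [mul_neg] using (leftHat A).neg_mem hy.2

theorem almostPrimeRight_iff_almostPrimeTwoSided' [Ring R] (P : AddSubgroup R)
    (hP : IsTwoSidedIdealSub P) (hproper : P ≠ ⊤) :
    IsAlmostPrimeRight P ↔ IsAlmostPrimeTwoSided P := by
  constructor
  · rintro ⟨_, _, h⟩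
    refine ⟨hP, hproper, fun A B hA hB hle hnle => ?_⟩
    exact h A B (fun a ha r => (hA a ha r).1) (fun b hb r => (hB b hb r).1) hle hnle
  · rintro ⟨_, _, h⟩
    refine ⟨fun a ha r => (hP a ha r).1, hproper, fun A B hA hB hle hnle => ?_⟩
    have hAB : idealMul (leftHat A) (leftHat B) ≤ P := by
      apply idealMul_le_of
      intro x hx y hy
      -- x ∈ leftHat A, y ∈ leftHat B; show x * y ∈ P
      induction hx using AddSubgroup.closure_induction with
      | mem x' hx' =>
        obtain ⟨s, a, ha, rfl⟩ := hx'
        -- (s * a) * y ∈ P : show a * y ∈ P first? y ∈ leftHat B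
        have hay : ∀ c : R, c ∈ A → c * y ∈ P := by
          intro c hc
          clear ha
          induction hy using AddSubgroup.closure_induction with
          | mem y' hy' =>
            obtain ⟨t, b, hb, rfl⟩ := hy'
            have : (c * t) * b ∈ P := hle (AddSubgroup.subset_closure
              ⟨c * t, hA c hc t, b, hb, rfl⟩)
            simpa [mul_assoc] using this
          | zero => simpa using P.zero_mem
          | add u v _ _ hu hv => simpa [mul_add] using P.add_mem hu hv
          | neg u _ hu => simpa [mul_neg] using P.neg_mem hu
        have := (hP _ (hay a ha) s).2
        simpa [mul_assoc] using this
      | zero => simpa using P.zero_mem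
      | add u v _ _ hu hv => simpa [add_mul] using P.add_mem hu hv
      | neg u _ hu => simpa [neg_mul] using P.neg_mem hu
    have hnle' : ¬ idealMul (leftHat A) (leftHat B) ≤ idealMul P P := fun hc =>
      hnle (le_trans (idealMul_mono (le_leftHat A) (le_leftHat B)) hc)
    rcases h (leftHat A) (leftHat B) (leftHat_twoSided hA) (leftHat_twoSided hB)
      hAB hnle' with h1 | h1
    · exact Or.inl (le_trans (le_leftHat A) h1)
    · exact Or.inr (le_trans (le_leftHat B) h1)

end Proof

/-- For a two-sided ideal `P` of a ring with identity, `P` is an almost prime right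
ideal iff `P` is an almost prime (two-sided) ideal. -/
theorem almostPrimeRight_iff_almostPrimeTwoSided [Ring R] (P : AddSubgroup R)
    (hP : IsTwoSidedIdealSub P) (hproper : P ≠ ⊤) :
    IsAlmostPrimeRight P ↔ IsAlmostPrimeTwoSided P :=
  almostPrimeRight_iff_almostPrimeTwoSided' P hP hproper
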